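/- Let 𝕜 be ℝ or ℂ and p ≥ 0. Let W ⊆ ℝ^p × ℝ^p be open and let g : W → 𝕜 be a C^∞ function with g(x, x) = 0 for every x ∈ ℝ^p with (x, x) ∈ W. Then every diagonal point (x, x) ∈ W has an open neighbourhood V ⊆ W on which there exist C^∞ functions k₁, …, k_p : V → 𝕜 such that g(x, y) = Σ_{j=1}^p (x_j − y_j) · k_j(x, y) for all (x, y) ∈ V. -/

import Mathlib

set_option maxHeartbeats 1000000
set_option synthInstance.maxHeartbeats 400000
open MeasureTheory Metric Set intervalIntegral

universe u

lemma aux_param (p : ℕ) (n : ℕ) :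
    ∀ {F : Type u} [NormedAddCommGroup F] [NormedSpace ℝ F] [CompleteSpace F]
      (f : ((Fin p → ℝ) × (Fin p → ℝ)) × ℝ → F)
      (O : Set (((Fin p → ℝ) × (Fin p → ℝ)) × ℝ)) (U : Set ((Fin p → ℝ) × (Fin p → ℝ))),
      IsOpen O → IsOpen U → U ×ˢ Set.Icc (0:ℝ) 1 ⊆ O → ContDiffOn ℝ n f O →
      ContDiffOn ℝ n (fun q => ∫ t in (0:ℝ)..1, f (q, t)) U := by
  induction n with
  | zero =>
    intro F _ _ _ f O U hO hU hsub hf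
    rw [show ((0:ℕ):WithTop ℕ∞) = 0 from rfl] at hf ⊢
    rw [contDiffOn_zero] at hf ⊢
    intro q₀ hq₀
    have hK : IsCompact ({q₀} ×ˢ Set.Icc (0:ℝ) 1) := isCompact_singleton.prod isCompact_Icc
    have hKO : {q₀} ×ˢ Set.Icc (0:ℝ) 1 ⊆ O := fun z hz => hsub ⟨hz.1 ▸ hq₀, hz.2⟩
    obtain ⟨δ, hδpos, hδ⟩ := hK.exists_thickening_subset_open hO hKO
    have hball : ball q₀ δ ×ˢ Set.Icc (0:ℝ) 1 ⊆ O := by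
      intro z hz
      apply hδ
      rw [Metric.mem_thickening_iff]
      refine ⟨(q₀, z.2), ⟨rfl, hz.2⟩, ?_⟩
      have hd : dist z (q₀, z.2) = dist z.1 q₀ := by simp [Prod.dist_eq, dist_nonneg]
      rw [hd]; exact hz.1
    set cl : ℝ → ℝ := fun t => (Set.projIcc (0:ℝ) 1 zero_le_one t : ℝ) with hcl
    have hcont : Continuous (Function.uncurry fun (z : ↥(ball q₀ δ)) (t : ℝ) =>
        f ((z : (Fin p → ℝ) × (Fin p → ℝ)), cl t)) := by
      apply hf.comp_continuous
      · exact (continuous_subtype_val.comp continuous_fst).prodMk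
          ((continuous_subtype_val.comp continuous_projIcc).comp continuous_snd)
      · intro z
        exact hball ⟨z.1.2, (Set.projIcc (0:ℝ) 1 zero_le_one z.2).2⟩
    have hI : Continuous fun z : ↥(ball q₀ δ) =>
        ∫ t in (0:ℝ)..1, f ((z : (Fin p → ℝ) × (Fin p → ℝ)), cl t) :=
      continuous_parametric_intervalIntegral_of_continuous' (μ := volume) hcont 0 1
    have hCO : ContinuousOn (fun q => ∫ t in (0:ℝ)..1, f (q, cl t)) (ball q₀ δ) :=
      continuousOn_iff_continuous_restrict.mpr hI
    have heq : ∀ q ∈ ball q₀ δ, (∫ t in (0:ℝ)..1, f (q, cl t)) = ∫ t in (0:ℝ)..1, f (q, t) := by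
      intro q _
      apply intervalIntegral.integral_congr
      intro t ht
      rw [Set.uIcc_of_le (zero_le_one (α := ℝ))] at ht
      simp [hcl, Set.projIcc_of_mem zero_le_one ht]
    have := (hCO.congr (fun q hq => (heq q hq).symm)).continuousAt (isOpen_ball.mem_nhds (mem_ball_self hδpos))
    exact this.continuousWithinAt
  | succ n ih =>
    intro F _ _ _ f O U hO hU hsub hf
    have hE : True := trivial
    let E := (Fin p → ℝ) × (Fin p → ℝ)
    set Φ : (E × ℝ →L[ℝ] F) →L[ℝ] (E →L[ℝ] F) :=
      (ContinuousLinearMap.compL ℝ E (E × ℝ) F).flip (ContinuousLinearMap.inl ℝ E ℝ) with hΦ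
    set f' : E × ℝ → (E →L[ℝ] F) := fun z => Φ (fderiv ℝ f z) with hf'def
    have hfd : ContDiffOn ℝ n (fderiv ℝ f) O :=
      hf.fderiv_of_isOpen (m := (n : WithTop ℕ∞)) hO (by exact_mod_cast le_refl (n+1))
    have hf' : ContDiffOn ℝ n f' O := Φ.contDiff.comp_contDiffOn hfd
    have hfc : ContinuousOn f O := hf.continuousOn
    have hf'c : ContinuousOn f' O := hf'.continuousOn
    have key : ∀ q₀ ∈ U, HasFDerivAt (fun q => ∫ t in (0:ℝ)..1, f (q, t))
        (∫ t in (0:ℝ)..1, f' (q₀, t)) q₀ := by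
      intro q₀ hq₀
      obtain ⟨δ, hδpos, hδ⟩ :=
        (isCompact_singleton.prod isCompact_Icc).exists_cthickening_subset_open hO
          (fun z hz => hsub ⟨hz.1 ▸ hq₀, hz.2⟩)
      have hcball : closedBall q₀ δ ×ˢ Set.Icc (0:ℝ) 1 ⊆ O := by
        intro z hz
        apply hδ
        refine mem_cthickening_of_dist_le z (q₀, z.2) δ _ ⟨rfl, hz.2⟩ ?_
        have hd : dist z (q₀, z.2) = dist z.1 q₀ := by simp [Prod.dist_eq, dist_nonneg]
        rw [hd]; exact hz.1
      have hcompact : IsCompact (closedBall q₀ δ ×ˢ Set.Icc (0:ℝ) 1) :=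
        (isCompact_closedBall _ _).prod isCompact_Icc
      obtain ⟨C, hC⟩ := hcompact.exists_bound_of_continuousOn (hf'c.mono hcball)
      have hmemO : ∀ q ∈ ball q₀ δ, ∀ t ∈ Set.Icc (0:ℝ) 1, ((q, t) : E × ℝ) ∈ O :=
        fun q hq t ht => hcball ⟨ball_subset_closedBall hq, ht⟩
      have hιsub : Set.uIoc (0:ℝ) 1 ⊆ Set.Icc (0:ℝ) 1 := by
        rw [Set.uIoc_of_le (zero_le_one (α := ℝ))]; exact Set.Ioc_subset_Icc_self
      have hcurve : ∀ q ∈ ball q₀ δ, ContinuousOn (fun t : ℝ => ((q, t) : E × ℝ))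
          (Set.Icc (0:ℝ) 1) := fun q _ => (Continuous.prodMk_right q).continuousOn
      refine intervalIntegral.hasFDerivAt_integral_of_dominated_of_fderiv_le
        (μ := MeasureTheory.volume) (F := fun q t => f (q, t)) (F' := fun q t => f' (q, t))
        (bound := fun _ => C) (s := ball q₀ δ) (isOpen_ball.mem_nhds (mem_ball_self hδpos)) ?_ ?_ ?_ ?_ ?_ ?_
      · filter_upwards [isOpen_ball.mem_nhds (mem_ball_self hδpos)] with q hq
        apply ContinuousOn.aestronglyMeasurable (s := Set.uIoc (0:ℝ) 1) _ measurableSet_uIoc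
        exact (hfc.comp (hcurve q hq) (fun t ht => hmemO q hq t ht)).mono hιsub
      · apply ContinuousOn.intervalIntegrable
        rw [Set.uIcc_of_le (zero_le_one (α := ℝ))]
        exact hfc.comp (hcurve q₀ (mem_ball_self hδpos))
          (fun t ht => hmemO q₀ (mem_ball_self hδpos) t ht)
      · apply ContinuousOn.aestronglyMeasurable (s := Set.uIoc (0:ℝ) 1) _ measurableSet_uIoc
        exact ((hf'c.comp (hcurve q₀ (mem_ball_self hδpos))
          (fun t ht => hmemO q₀ (mem_ball_self hδpos) t ht))).mono hιsub
      · apply Filter.Eventually.of_forall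
        intro t ht q hq
        exact hC (q, t) ⟨ball_subset_closedBall hq, hιsub ht⟩
      · exact intervalIntegrable_const
      · apply Filter.Eventually.of_forall
        intro t ht q hq
        have hmem : ((q, t) : E × ℝ) ∈ O := hmemO q hq t (hιsub ht)
        have hdf : DifferentiableAt ℝ f (q, t) :=
          (hf.differentiableOn (by simp)).differentiableAt
            (hO.mem_nhds hmem)
        have hcomp := hdf.hasFDerivAt.comp q (hasFDerivAt_prodMk_left (𝕜 := ℝ) q t)
        exact hcomp
    rw [show ((n+1:ℕ):WithTop ℕ∞) = (n : WithTop ℕ∞) + 1 by push_cast; rfl]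
    rw [contDiffOn_succ_iff_fderiv_of_isOpen hU]
    refine ⟨fun q hq => (key q hq).differentiableAt.differentiableWithinAt,
      fun h => absurd h (by exact_mod_cast WithTop.natCast_ne_top n), ?_⟩
    exact (ih f' O U hO hU hsub hf').congr fun q hq => (key q hq).fderiv

/-- Diagonal Hadamard lemma: if `g` is a smooth `𝕜`-valued function (`𝕜 = ℝ` or `ℂ`)
on an open set `W ⊆ ℝ^p × ℝ^p` vanishing on the diagonal, then around every diagonal
point of `W` there are an open neighbourhood `V ⊆ W` and smooth functions
`k₁, …, k_p` on `V` with `g (x, y) = Σ_j (x_j − y_j) · k_j (x, y)` on `V`. -/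
theorem diagonal_hadamard {𝕜 : Type*} [RCLike 𝕜] {p : ℕ}
    (W : Set ((Fin p → ℝ) × (Fin p → ℝ))) (hW : IsOpen W)
    (g : (Fin p → ℝ) × (Fin p → ℝ) → 𝕜)
    (hg : ContDiffOn ℝ (⊤ : ℕ∞) g W)
    (hdiag : ∀ x : Fin p → ℝ, (x, x) ∈ W → g (x, x) = 0)
    (x : Fin p → ℝ) (hx : (x, x) ∈ W) :
    ∃ V : Set ((Fin p → ℝ) × (Fin p → ℝ)), V ⊆ W ∧ IsOpen V ∧ (x, x) ∈ V ∧
      ∃ k : Fin p → ((Fin p → ℝ) × (Fin p → ℝ)) → 𝕜,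
        (∀ j, ContDiffOn ℝ (⊤ : ℕ∞) (k j) V) ∧
        ∀ q ∈ V, g q = ∑ j, algebraMap ℝ 𝕜 (q.1 j - q.2 j) * k j q := by
  obtain ⟨ε, hεpos, hε⟩ := Metric.isOpen_iff.mp hW (x, x) hx
  set V : Set ((Fin p → ℝ) × (Fin p → ℝ)) := ball x (ε/2) ×ˢ ball x (ε/2) with hV
  have hVW : V ⊆ W := by
    rw [hV, ball_prod_same]
    exact (ball_subset_ball (by linarith)).trans hε
  have hVopen : IsOpen V := isOpen_ball.prod isOpen_ball
  have hxV : (x, x) ∈ V := ⟨mem_ball_self (by linarith), mem_ball_self (by linarith)⟩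
  set Γ : ((Fin p → ℝ) × (Fin p → ℝ)) × ℝ → (Fin p → ℝ) × (Fin p → ℝ) :=
    fun z => (z.1.2 + z.2 • (z.1.1 - z.1.2), z.1.2) with hΓ
  have hΓsmooth : ContDiff ℝ (⊤ : ℕ∞) Γ := by
    apply ContDiff.prodMk
    · exact (contDiff_snd.comp contDiff_fst).add
        (contDiff_snd.smul ((contDiff_fst.comp contDiff_fst).sub (contDiff_snd.comp contDiff_fst)))
    · exact contDiff_snd.comp contDiff_fst
  set O : Set (((Fin p → ℝ) × (Fin p → ℝ)) × ℝ) := Γ ⁻¹' W with hO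
  have hOopen : IsOpen O := hW.preimage hΓsmooth.continuous
  have hVO : V ×ˢ Set.Icc (0:ℝ) 1 ⊆ O := by
    rintro ⟨⟨a, b⟩, t⟩ ⟨⟨ha, hb⟩, ht⟩
    have hkey : b + t • (a - b) ∈ ball x (ε/2) := by
      have heq : b + t • (a - b) = (1 - t) • b + t • a := by module
      rw [heq]
      exact (convex_ball x (ε/2)) hb ha (by linarith [ht.2]) ht.1 (by ring)
    show Γ (⟨⟨a, b⟩, t⟩) ∈ W
    apply hVW
    exact ⟨hkey, hb⟩
  set Fj : Fin p → ((Fin p → ℝ) × (Fin p → ℝ)) × ℝ → 𝕜 :=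
    fun j z => fderiv ℝ g (Γ z) (Pi.single j 1, (0 : Fin p → ℝ)) with hFjdef
  have hgd : ContDiffOn ℝ (⊤ : ℕ∞) (fderiv ℝ g) W :=
    hg.fderiv_of_isOpen (m := ((⊤:ℕ∞) : WithTop ℕ∞)) hW (by simp)
  have hFj : ∀ j, ContDiffOn ℝ (⊤ : ℕ∞) (Fj j) O := by
    intro j
    exact (hgd.comp hΓsmooth.contDiffOn (fun z hz => hz)).clm_apply contDiffOn_const
  set k : Fin p → ((Fin p → ℝ) × (Fin p → ℝ)) → 𝕜 :=
    fun j q => ∫ t in (0:ℝ)..1, Fj j (q, t) with hk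
  refine ⟨V, hVW, hVopen, hxV, k, ?_, ?_⟩
  · intro j
    rw [show ((⊤:ℕ∞) : WithTop ℕ∞) = (⊤:ℕ∞) from rfl]
    apply contDiffOn_infty.mpr
    intro n
    exact aux_param p n (Fj j) O V hOopen hVopen hVO ((hFj j).of_le (by exact_mod_cast le_top))
  · intro q hq
    have hone : (1 : WithTop ℕ∞) ≤ ((⊤:ℕ∞) : WithTop ℕ∞) := by exact_mod_cast le_top
    have hbW : (q.2, q.2) ∈ W := by
      have h0 : ((q, (0:ℝ))) ∈ V ×ˢ Set.Icc (0:ℝ) 1 :=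
        Set.mem_prod.mpr ⟨hq, Set.left_mem_Icc.mpr zero_le_one⟩
      have hin := hVO h0
      have : Γ (q, 0) = (q.2, q.2) := by
        show (q.2 + (0:ℝ) • (q.1 - q.2), q.2) = (q.2, q.2)
        rw [zero_smul, add_zero]
      rwa [Set.mem_preimage, this] at hin
    have hderiv : ∀ t ∈ Set.uIcc (0:ℝ) 1, HasDerivAt (fun s => g (Γ (q, s)))
        (∑ j, (q.1 j - q.2 j) • Fj j (q, t)) t := by
      intro t ht
      rw [Set.uIcc_of_le (zero_le_one (α := ℝ))] at ht
      have hWmem : Γ (q, t) ∈ W := hVO ⟨hq, ht⟩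
      have hgdiff : DifferentiableAt ℝ g (Γ (q, t)) :=
        (hg.differentiableOn (by simp)).differentiableAt (hW.mem_nhds hWmem)
      have hcurve : HasDerivAt (fun s : ℝ => Γ (q, s)) ((q.1 - q.2, 0)) t := by
        have h1 : HasDerivAt (fun s : ℝ => q.2 + s • (q.1 - q.2)) ((1:ℝ) • (q.1 - q.2)) t :=
          ((hasDerivAt_id t).smul_const (q.1 - q.2)).const_add q.2
        rw [one_smul] at h1
        exact HasDerivAt.prodMk h1 (hasDerivAt_const t q.2)
      have hchain := hgdiff.hasFDerivAt.comp_hasDerivAt t hcurve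
      refine HasDerivAt.congr_deriv hchain (Eq.symm ?_)
      have hvec : ((q.1 - q.2 : Fin p → ℝ), (0 : Fin p → ℝ)) =
          ∑ j, (q.1 j - q.2 j) • ((Pi.single j 1 : Fin p → ℝ), (0 : Fin p → ℝ)) := by
        rw [Prod.ext_iff]
        constructor
        · rw [Prod.fst_sum]
          funext i
          simp [Finset.sum_apply, Pi.single_apply, mul_ite, Finset.sum_ite_eq']
        · rw [Prod.snd_sum]
          simp
      rw [hvec, map_sum]
      refine Finset.sum_congr rfl fun j _ => ?_
      show (q.1 j - q.2 j) • (fderiv ℝ g (Γ (q, t))) (Pi.single j 1, 0) = _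
      exact (ContinuousLinearMap.map_smul _ _ _).symm
    have hint : ∀ j, IntervalIntegrable (fun t => Fj j (q, t)) MeasureTheory.volume 0 1 := by
      intro j
      apply ContinuousOn.intervalIntegrable
      rw [Set.uIcc_of_le (zero_le_one (α := ℝ))]
      exact (hFj j).continuousOn.comp (Continuous.prodMk_right q).continuousOn
        (fun t ht => hVO ⟨hq, ht⟩)
    have hint' : ∀ j, IntervalIntegrable (fun t => (q.1 j - q.2 j) • Fj j (q, t))
        MeasureTheory.volume 0 1 := fun j => by exact (hint j).smul (q.1 j - q.2 j)
    have hsum_int : IntervalIntegrable (fun t => ∑ j, (q.1 j - q.2 j) • Fj j (q, t))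
        MeasureTheory.volume 0 1 := by
      have h2 := IntervalIntegrable.sum Finset.univ
        (f := fun j t => (q.1 j - q.2 j) • Fj j (q, t)) (fun j _ => hint' j)
      simpa [Finset.sum_fn] using h2
    have heval := intervalIntegral.integral_eq_sub_of_hasDerivAt hderiv hsum_int
    have hΓ1 : Γ (q, 1) = q := by
      show (q.2 + (1:ℝ) • (q.1 - q.2), q.2) = q
      rw [one_smul, Prod.ext_iff]
      exact ⟨by module, rfl⟩
    have hΓ0 : Γ (q, 0) = (q.2, q.2) := by
      show (q.2 + (0:ℝ) • (q.1 - q.2), q.2) = (q.2, q.2)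
      rw [zero_smul, add_zero]
    rw [hΓ1, hΓ0, hdiag q.2 hbW, sub_zero] at heval
    have hswap := intervalIntegral.integral_finset_sum (μ := MeasureTheory.volume) (s := Finset.univ) (a := (0:ℝ))
      (b := 1) (f := fun j t => (q.1 j - q.2 j) • Fj j (q, t))
      (fun j _ => hint' j)
    rw [← heval, hswap]
    refine Finset.sum_congr rfl fun j _ => ?_
    rw [intervalIntegral.integral_smul, Algebra.smul_def]
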